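/- Let m ⊆ R be a maximal ideal, g ∈ ℤ^n, and suppose a ∈ 𝒜(g) and a' ∈ 𝒜(−g) satisfy a'·a ∈ ι(R) \ ι(m). Then for every b ∈ 𝒜(g) there exist r, r' ∈ R such that b − ι(r)·a ∈ (m) and b − a·ι(r') ∈ (m). In other words, modulo the two-sided ideal (m), the degree-g component 𝒜(g) is spanned over ι(R) (on either side) by the single element a. -/
import Mathlib


/-- Lemma `dim`: in a `ℤ^n`-graded algebra `A` with degree-zero
subalgebra `ι(R)`, if `m ⊆ R` is maximal, `a ∈ 𝒜 g`, `a' ∈ 𝒜 (−g)` and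
`a'·a ∈ ι(R) \ ι(m)`, then modulo the two-sided ideal generated by `ι(m)`, every
`b ∈ 𝒜 g` is an `ι(R)`-multiple (on either side) of `a`. -/
theorem stmt_15 {K A R : Type*} [Field K] [Ring A] [Algebra K A]
    [CommRing R] [Algebra K R]
    (n : ℕ) (hn : 1 ≤ n)
    (𝒜 : (Fin n → ℤ) → Submodule K A)
    (hdirect : DirectSum.IsInternal 𝒜)
    (hone : (1 : A) ∈ 𝒜 0)
    (hgmul : ∀ g h : Fin n → ℤ, ∀ a ∈ 𝒜 g, ∀ b ∈ 𝒜 h, a * b ∈ 𝒜 (g + h))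
    (ι : R →ₐ[K] A) (hinj : Function.Injective ι)
    (hrange : (𝒜 0 : Set A) = Set.range ι)
    (σ : (Fin n → ℤ) → (R ≃ₐ[K] R))
    (hσ : ∀ g h : Fin n → ℤ, σ (g + h) = σ g * σ h)
    (hcomm : ∀ g : Fin n → ℤ, ∀ a ∈ 𝒜 g, ∀ r : R, a * ι r = ι (σ g r) * a)
    (m : Ideal R) (hm : m.IsMaximal)
    (g : Fin n → ℤ) (a : A) (ha : a ∈ 𝒜 g) (a' : A) (ha' : a' ∈ 𝒜 (-g))
    (haa : a' * a ∈ Set.range ⇑ι \ ⇑ι '' ↑m) :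
    ∀ b ∈ 𝒜 g, ∃ r r' : R,
      b - ι r * a ∈ TwoSidedIdeal.span (⇑ι '' ↑m) ∧
      b - a * ι r' ∈ TwoSidedIdeal.span (⇑ι '' ↑m) := by
  intro b hb
  obtain ⟨⟨t, ht⟩, hnot⟩ := haa
  have htm : t ∉ m := fun h => hnot ⟨t, h, ht⟩
  obtain ⟨u, v, hvm, huv⟩ := hm.exists_inv htm
  -- `b * a' ∈ 𝒜 0 = ι(R)`
  have hba : b * a' ∈ 𝒜 0 := by
    have := hgmul g (-g) b hb a' ha'
    simpa using this
  obtain ⟨s', hs'⟩ : ∃ s', ι s' = b * a' := by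
    have : b * a' ∈ Set.range ι := hrange ▸ hba
    exact this
  -- σ 0 = 1 and σ g * σ (-g) = 1
  have hσ0 : σ 0 = 1 := by
    have h := hσ 0 0
    rw [add_zero] at h
    exact (mul_left_cancel (a := σ 0) (by rw [mul_one, ← h])).symm
  have hσinv : ∀ r : R, σ g (σ (-g) r) = r := by
    intro r
    have h := hσ g (-g)
    rw [add_neg_cancel, hσ0] at h
    rw [← AlgEquiv.mul_apply, ← h, AlgEquiv.one_apply]
  set r : R := s' * σ g u with hr
  -- key identity : b - ι r * a = b * ι v
  have key : b - ι r * a = b * ι v := by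
    have h1 : ι r * a = b * ι (t * u) := by
      calc ι r * a = ι s' * (ι (σ g u) * a) := by rw [hr, map_mul, mul_assoc]
        _ = ι s' * (a * ι u) := by rw [hcomm g a ha u]
        _ = b * a' * a * ι u := by rw [hs', ← mul_assoc]
        _ = b * (ι t * ι u) := by rw [mul_assoc b a' a, ← ht, ← mul_assoc]
        _ = b * ι (t * u) := by rw [map_mul]
    have h2 : (v : R) = 1 - t * u := by
      linear_combination huv
    rw [h1, h2]
    rw [map_sub, map_one, mul_sub, mul_one]
  have hv : b * ι v ∈ TwoSidedIdeal.span (⇑ι '' ↑m) :=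
    TwoSidedIdeal.mul_mem_left _ _ _ (TwoSidedIdeal.subset_span ⟨v, hvm, rfl⟩)
  refine ⟨r, σ (-g) r, ?_, ?_⟩
  · rw [key]; exact hv
  · have : a * ι (σ (-g) r) = ι r * a := by
      rw [hcomm g a ha (σ (-g) r), hσinv]
    rw [this, key]; exact hv
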